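/- With the above notation, r·(l + m + n + 1 − √(l²+1) + √(m²+1) + √(n²+1))/(2l) = r_A·cos²(σ − α). -/

import Mathlib

open Real

theorem malfatti_radius_i5_A
    (a b c : ℝ) (ha : 0 < a) (hb : 0 < b) (hc : 0 < c)
    (habc : a < b + c) (hbca : b < c + a) (hcab : c < a + b)
    (s r rA rB rC α β γ σ l m n : ℝ)
    (hs : s = (a + b + c) / 2)
    (hr : r = Real.sqrt ((s - a) * (s - b) * (s - c) / s))
    (hrA : rA = Real.sqrt (s * (s - b) * (s - c) / (s - a)))
    (hrB : rB = Real.sqrt (s * (s - c) * (s - a) / (s - b)))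
    (hrC : rC = Real.sqrt (s * (s - a) * (s - b) / (s - c)))
    (hα : α ∈ Set.Ioo 0 (π / 2)) (hβ : β ∈ Set.Ioo 0 (π / 2)) (hγ : γ ∈ Set.Ioo 0 (π / 2))
    (hsinα : Real.sin α ^ 2 = a / s)
    (hsinβ : Real.sin β ^ 2 = b / s)
    (hsinγ : Real.sin γ ^ 2 = c / s)
    (hσ : σ = (α + β + γ) / 2)
    (hl : l = (s - a) / r) (hm : m = (s - b) / r) (hn : n = (s - c) / r) :
    r * (l + m + n + 1 - Real.sqrt (l ^ 2 + 1) + Real.sqrt (m ^ 2 + 1) + Real.sqrt (n ^ 2 + 1)) / (2 * l) = rA * Real.cos (σ - α) ^ 2 := by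
  have hs0 : 0 < s := by rw [hs]; linarith
  have hx : 0 < s - a := by rw [hs]; linarith
  have hy : 0 < s - b := by rw [hs]; linarith
  have hz : 0 < s - c := by rw [hs]; linarith
  set x := s - a with hxe
  set y := s - b with hye
  set z := s - c with hze
  have hxyz : x + y + z = s := by rw [hxe, hye, hze, hs]; ring
  have hab : a = y + z := by rw [hye, hze, hs]; ring
  have hbb : b = x + z := by rw [hxe, hze, hs]; ring
  have hcb : c = x + y := by rw [hxe, hye, hs]; ring
  have hr0 : 0 < r := by
    rw [hr]; exact Real.sqrt_pos.mpr (by positivity)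
  have hr2 : r ^ 2 = x * y * z / s := by
    rw [hr]; exact Real.sq_sqrt (by positivity)
  have hsne : s ≠ 0 := hs0.ne'
  -- trig values
  have cospos : ∀ t : ℝ, t ∈ Set.Ioo 0 (π / 2) → 0 < Real.cos t := fun t ht =>
    Real.cos_pos_of_mem_Ioo ⟨by linarith [ht.1, Real.pi_pos], ht.2⟩
  have sinpos : ∀ t : ℝ, t ∈ Set.Ioo 0 (π / 2) → 0 < Real.sin t := fun t ht =>
    Real.sin_pos_of_pos_of_lt_pi ht.1 (by linarith [ht.2, Real.pi_pos])
  have hcos2 : ∀ t u : ℝ, Real.sin t ^ 2 = u / s → Real.cos t ^ 2 = (s - u) / s := by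
    intro t u h
    have h2 := Real.sin_sq_add_cos_sq t
    rw [h] at h2
    field_simp at h2 ⊢
    linarith [h2]
  have hcα : Real.cos α = Real.sqrt (x / s) := by
    have h2 := hcos2 α a hsinα
    rw [← hxe] at h2
    rw [← h2, Real.sqrt_sq (cospos α hα).le]
  have hcβ : Real.cos β = Real.sqrt (y / s) := by
    have h2 := hcos2 β b hsinβ
    rw [← hye] at h2
    rw [← h2, Real.sqrt_sq (cospos β hβ).le]
  have hcγ : Real.cos γ = Real.sqrt (z / s) := by
    have h2 := hcos2 γ c hsinγ
    rw [← hze] at h2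
    rw [← h2, Real.sqrt_sq (cospos γ hγ).le]
  have hsα : Real.sin α = Real.sqrt ((y + z) / s) := by
    rw [← hab, ← hsinα, Real.sqrt_sq (sinpos α hα).le]
  have hsβ : Real.sin β = Real.sqrt ((x + z) / s) := by
    rw [← hbb, ← hsinβ, Real.sqrt_sq (sinpos β hβ).le]
  have hsγ : Real.sin γ = Real.sqrt ((x + y) / s) := by
    rw [← hcb, ← hsinγ, Real.sqrt_sq (sinpos γ hγ).le]
  -- triple products of square roots
  have tri : ∀ p q t w : ℝ, 0 ≤ p → 0 ≤ q → 0 ≤ t → 0 ≤ w →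
      p * q * t = w * s →
      Real.sqrt (p / s) * Real.sqrt (q / s) * Real.sqrt (t / s) = Real.sqrt w / s := by
    intro p q t w hp hq ht hw h
    have hp' : (0:ℝ) ≤ p / s := div_nonneg hp hs0.le
    have hpq' : (0:ℝ) ≤ p / s * (q / s) := mul_nonneg hp' (div_nonneg hq hs0.le)
    rw [← Real.sqrt_mul hp', ← Real.sqrt_mul hpq']
    rw [show p / s * (q / s) * (t / s) = w / s ^ 2 from by
      field_simp
      linear_combination h]
    rw [Real.sqrt_div hw, Real.sqrt_sq hs0.le]
  have e1 : Real.sqrt (y / s) * Real.sqrt (z / s) * Real.sqrt (x / s) = r / s := by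
    have h := tri y z x (r ^ 2) hy.le hz.le hx.le (by positivity)
      (by rw [hr2]; field_simp)
    rwa [Real.sqrt_sq hr0.le] at h
  have e2 : Real.sqrt ((x + z) / s) * Real.sqrt ((x + y) / s) * Real.sqrt (x / s)
      = Real.sqrt (x ^ 2 + r ^ 2) / s := by
    refine tri _ _ _ _ (by linarith) (by linarith) hx.le (by positivity) ?_
    rw [hr2, ← hxyz]
    have h0 : x + y + z ≠ 0 := by positivity
    field_simp
    ring
  have e3 : Real.sqrt ((x + z) / s) * Real.sqrt (z / s) * Real.sqrt ((y + z) / s)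
      = Real.sqrt (z ^ 2 + r ^ 2) / s := by
    refine tri _ _ _ _ (by linarith) hz.le (by linarith) (by positivity) ?_
    rw [hr2, ← hxyz]
    have h0 : x + y + z ≠ 0 := by positivity
    field_simp
    ring
  have e4 : Real.sqrt (y / s) * Real.sqrt ((x + y) / s) * Real.sqrt ((y + z) / s)
      = Real.sqrt (y ^ 2 + r ^ 2) / s := by
    refine tri _ _ _ _ hy.le (by linarith) (by linarith) (by positivity) ?_
    rw [hr2, ← hxyz]
    have h0 : x + y + z ≠ 0 := by positivity
    field_simp
    ring
  have expand : Real.cos (β + γ - α) =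
      Real.cos β * Real.cos γ * Real.cos α - Real.sin β * Real.sin γ * Real.cos α
      + Real.sin β * Real.cos γ * Real.sin α + Real.cos β * Real.sin γ * Real.sin α := by
    rw [Real.cos_sub, Real.cos_add, Real.sin_add]; ring
  have hkey : Real.cos (β + γ - α)
      = (r - Real.sqrt (x ^ 2 + r ^ 2) + Real.sqrt (y ^ 2 + r ^ 2)
          + Real.sqrt (z ^ 2 + r ^ 2)) / s := by
    rw [expand, hcα, hcβ, hcγ, hsα, hsβ, hsγ, e1, e2, e3, e4]
    ring
  have harA : rA = r * s / x := by
    have h : s * y * z / x = (r * s / x) ^ 2 := by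
      rw [div_pow, mul_pow, hr2]
      field_simp
    rw [hrA, h, Real.sqrt_sq (by positivity)]
  have hA' : Real.sqrt ((x / r) ^ 2 + 1) = Real.sqrt (x ^ 2 + r ^ 2) / r := by
    rw [show (x / r) ^ 2 + 1 = (x ^ 2 + r ^ 2) / r ^ 2 from by field_simp,
      Real.sqrt_div (by positivity), Real.sqrt_sq hr0.le]
  have hB' : Real.sqrt ((y / r) ^ 2 + 1) = Real.sqrt (y ^ 2 + r ^ 2) / r := by
    rw [show (y / r) ^ 2 + 1 = (y ^ 2 + r ^ 2) / r ^ 2 from by field_simp,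
      Real.sqrt_div (by positivity), Real.sqrt_sq hr0.le]
  have hC' : Real.sqrt ((z / r) ^ 2 + 1) = Real.sqrt (z ^ 2 + r ^ 2) / r := by
    rw [show (z / r) ^ 2 + 1 = (z ^ 2 + r ^ 2) / r ^ 2 from by field_simp,
      Real.sqrt_div (by positivity), Real.sqrt_sq hr0.le]
  rw [hl, hm, hn, hA', hB', hC', Real.cos_sq,
    show 2 * (σ - α) = β + γ - α from by rw [hσ]; ring, hkey, harA, ← hxyz]
  have h0 : x + y + z ≠ 0 := by positivity
  field_simp
  ring
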